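/- Let I be a real symmetric positive definite 3×3 matrix and a ∈ ℝ³ a nonzero vector which is not an eigenvector of I. Let ω : ℝ → ℝ³ be continuously differentiable and λ : ℝ → ℝ be such that I ω′(t) + ω(t) × (I ω(t)) = λ(t)·a and ⟨a, ω(t)⟩ = 0 for all t ∈ ℝ, and assume ω(0) is not a steady state, i.e. ω(0) is not a scalar multiple of a × Ia. Then there exists a steady state ω₀ ∈ span(a × Ia), ω₀ ≠ 0, such that ω(t) → ω₀ as t → +∞ and ω(t) → −ω₀ as t → −∞. In other words, every non-stationary motion is an asymptotic transition from steady rotation with angular velocity −ω₀ to steady rotation with the same magnitude but opposite angular velocity ω₀. -/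

import Mathlib

open Matrix Filter

private lemma hasDerivAt_const_dot {ω : ℝ → Fin 3 → ℝ} {D : Fin 3 → ℝ} {t : ℝ}
    (h : HasDerivAt ω D t) (c : Fin 3 → ℝ) :
    HasDerivAt (fun u => c ⬝ᵥ ω u) (c ⬝ᵥ D) t := by
  have h' := hasDerivAt_pi.1 h
  have : HasDerivAt (fun u => ∑ i : Fin 3, c i * ω u i) (∑ i : Fin 3, c i * D i) t :=
    HasDerivAt.fun_sum (fun i _ => (h' i).const_mul (c i))
  simpa [dotProduct] using this

private lemma hasDerivAt_quad {ω : ℝ → Fin 3 → ℝ} {D : Fin 3 → ℝ} {t : ℝ}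
    (h : HasDerivAt ω D t) (I : Matrix (Fin 3) (Fin 3) ℝ) :
    HasDerivAt (fun u => ω u ⬝ᵥ (I *ᵥ ω u)) (D ⬝ᵥ (I *ᵥ ω t) + ω t ⬝ᵥ (I *ᵥ D)) t := by
  have h' := hasDerivAt_pi.1 h
  have hm : ∀ i : Fin 3, HasDerivAt (fun u => (I *ᵥ ω u) i) ((I *ᵥ D) i) t := by
    intro i
    have := hasDerivAt_const_dot h (I i)
    simpa [Matrix.mulVec] using this
  have : HasDerivAt (fun u => ∑ i : Fin 3, ω u i * (I *ᵥ ω u) i)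
      (∑ i : Fin 3, (D i * (I *ᵥ ω t) i + ω t i * (I *ᵥ D) i)) t :=
    HasDerivAt.fun_sum (fun i _ => (h' i).mul (hm i))
  simpa [dotProduct, Finset.sum_add_distrib] using this

private lemma aux_tendsto_zero {s r ρ : ℝ → ℝ} {M B : ℝ}
    (hs : ∀ t, HasDerivAt s ((r t)^2) t)
    (hr : ∀ t, HasDerivAt r (ρ t) t)
    (hρ : ∀ t, |ρ t| ≤ M)
    (hB : ∀ t, s t ≤ B) :
    Tendsto r atTop (nhds 0) := by
  by_contra hcon
  set M₁ : ℝ := M + 1 with hM₁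
  have hM₁pos : 0 < M₁ := lt_of_le_of_lt (le_trans (abs_nonneg _) (hρ 0)) (lt_add_one M)
  have hρ₁ : ∀ t, |ρ t| ≤ M₁ := fun t => le_trans (hρ t) (le_add_of_nonneg_right zero_le_one)
  have hlip : ∀ t u : ℝ, |r u - r t| ≤ M₁ * |u - t| := by
    intro t u
    have := Convex.norm_image_sub_le_of_norm_hasDerivWithin_le
      (f := r) (f' := ρ) (s := Set.univ) (C := M₁)
      (fun x _ => (hr x).hasDerivWithinAt)
      (fun x _ => by simpa using hρ₁ x) convex_univ (Set.mem_univ t) (Set.mem_univ u)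
    simpa [Real.norm_eq_abs] using this
  have hsdiff : Differentiable ℝ s := fun t => (hs t).differentiableAt
  have hmono : Monotone s := monotone_of_deriv_nonneg hsdiff (fun t => by
    rw [(hs t).deriv]; positivity)
  rw [Metric.tendsto_atTop] at hcon
  push_neg at hcon
  obtain ⟨ε, hε, hbad⟩ := hcon
  set δ : ℝ := ε / (2 * M₁) with hδ
  have hδpos : 0 < δ := div_pos hε (by linarith)
  set c : ℝ := (ε/2)^2 * δ with hc
  have hcpos : 0 < c := by positivity
  have hMδ : M₁ * δ = ε / 2 := by
    field_simp [hδ]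
    rw [hδ]; field_simp
  have key : ∀ t : ℝ, ε ≤ |r t| → s t + c ≤ s (t + δ) := by
    intro t hrt
    have hhalf : ∀ u ∈ Set.Icc t (t + δ), ε/2 ≤ |r u| := by
      intro u hu
      have h1 : |r u - r t| ≤ M₁ * |u - t| := hlip t u
      have h2 : |u - t| ≤ δ := by
        rw [abs_le]; constructor <;> [linarith [hu.1]; linarith [hu.2]]
      have h3 : |r u - r t| ≤ ε / 2 := by
        calc |r u - r t| ≤ M₁ * |u - t| := h1
        _ ≤ M₁ * δ := by nlinarith
        _ = ε / 2 := hMδ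
      have := abs_sub_abs_le_abs_sub (r t) (r u)
      have h4 : |r t - r u| = |r u - r t| := abs_sub_comm _ _
      linarith
    set F : ℝ → ℝ := fun u => s u - (ε/2)^2 * u with hF
    have hFd : ∀ u, HasDerivAt F ((r u)^2 - (ε/2)^2) u := by
      intro u
      simpa using (hs u).fun_sub ((hasDerivAt_id u).const_mul ((ε/2)^2))
    have hFmono : MonotoneOn F (Set.Icc t (t + δ)) := by
      apply monotoneOn_of_deriv_nonneg (convex_Icc _ _)
      · exact Continuous.continuousOn (by
          have hc1 : Continuous s := hsdiff.continuous
          fun_prop)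
      · intro u _
        exact ((hFd u).differentiableAt).differentiableWithinAt
      · intro u hu
        rw [(hFd u).deriv]
        have hu' : u ∈ Set.Icc t (t + δ) := interior_subset hu
        have h5 : (ε/2)^2 ≤ |r u|^2 := pow_le_pow_left₀ (by positivity) (hhalf u hu') 2
        rw [sq_abs] at h5
        linarith
    have h6 : F t ≤ F (t + δ) := hFmono (Set.left_mem_Icc.2 (by linarith))
      (Set.right_mem_Icc.2 (by linarith)) (by linarith)
    simp only [hF] at h6
    linarith
  have h2 : ∀ N : ℝ, ∃ n, N ≤ n ∧ ε ≤ |r n| := by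
    intro N
    obtain ⟨n, hn1, hn2⟩ := hbad N
    exact ⟨n, hn1, by simpa [Real.dist_eq] using hn2⟩
  let T : ℕ → ℝ := fun k =>
    Nat.rec (Classical.choose (h2 0)) (fun _ p => Classical.choose (h2 (p + δ))) k
  have hT0 : ε ≤ |r (T 0)| := (Classical.choose_spec (h2 0)).2
  have hTsucc : ∀ k, T k + δ ≤ T (k+1) ∧ ε ≤ |r (T (k+1))| :=
    fun k => ⟨(Classical.choose_spec (h2 (T k + δ))).1,
      (Classical.choose_spec (h2 (T k + δ))).2⟩
  have hTr : ∀ k, ε ≤ |r (T k)| := by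
    intro k; cases k with
    | zero => exact hT0
    | succ k => exact (hTsucc k).2
  have hgrow : ∀ k : ℕ, s (T 0) + k * c ≤ s (T k) := by
    intro k
    induction k with
    | zero => simp
    | succ k ih =>
      have h7 : s (T k) + c ≤ s (T k + δ) := key (T k) (hTr k)
      have h8 : s (T k + δ) ≤ s (T (k+1)) := hmono (hTsucc k).1
      push_cast
      push_cast at ih
      linarith
  obtain ⟨k, hk⟩ := exists_nat_gt ((B - s (T 0)) / c)
  have hg := hgrow k
  have hBk := hB (T k)
  rw [div_lt_iff₀ hcpos] at hk
  linarith

private lemma posdef_coercive {I : Matrix (Fin 3) (Fin 3) ℝ} (hpd : I.PosDef) :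
    ∃ m : ℝ, 0 < m ∧ ∀ v : Fin 3 → ℝ, m * ‖v‖^2 ≤ v ⬝ᵥ (I *ᵥ v) := by
  have hQc : Continuous fun v : Fin 3 → ℝ => v ⬝ᵥ (I *ᵥ v) := by
    simp only [Matrix.mulVec, dotProduct, Fin.sum_univ_three]
    fun_prop
  have hpos : ∀ v : Fin 3 → ℝ, v ≠ 0 → 0 < v ⬝ᵥ (I *ᵥ v) := by
    intro v hv
    have := hpd.dotProduct_mulVec_pos hv
    simpa using this
  have hsph : IsCompact (Metric.sphere (0 : Fin 3 → ℝ) 1) := isCompact_sphere 0 1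
  have hne : (Metric.sphere (0 : Fin 3 → ℝ) 1).Nonempty :=
    NormedSpace.sphere_nonempty.2 zero_le_one
  obtain ⟨v0, hv0mem, hmin⟩ := hsph.exists_isMinOn hne hQc.continuousOn
  have hv0 : v0 ≠ 0 := by
    intro h
    rw [h] at hv0mem
    simp at hv0mem
  refine ⟨v0 ⬝ᵥ (I *ᵥ v0), hpos v0 hv0, ?_⟩
  intro v
  rcases eq_or_ne v 0 with rfl | hv
  · simp
  · have hnv : (0:ℝ) < ‖v‖ := norm_pos_iff.2 hv
    set u : Fin 3 → ℝ := ‖v‖⁻¹ • v with hu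
    have humem : u ∈ Metric.sphere (0 : Fin 3 → ℝ) 1 := by
      simp [hu, norm_smul, abs_of_pos (inv_pos.2 hnv), inv_mul_cancel₀ hnv.ne']
    have h1 : v0 ⬝ᵥ (I *ᵥ v0) ≤ u ⬝ᵥ (I *ᵥ u) := hmin humem
    have h2 : u ⬝ᵥ (I *ᵥ u) = ‖v‖⁻¹^2 * (v ⬝ᵥ (I *ᵥ v)) := by
      simp [hu, Matrix.mulVec_smul, smul_dotProduct, dotProduct_smul, smul_eq_mul]
      ring
    rw [h2] at h1
    have h3 : v0 ⬝ᵥ (I *ᵥ v0) * ‖v‖^2 ≤ ‖v‖⁻¹^2 * (v ⬝ᵥ (I *ᵥ v)) * ‖v‖^2 := by nlinarith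
    calc v0 ⬝ᵥ (I *ᵥ v0) * ‖v‖^2 ≤ ‖v‖⁻¹^2 * (v ⬝ᵥ (I *ᵥ v)) * ‖v‖^2 := h3
    _ = v ⬝ᵥ (I *ᵥ v) := by field_simp

private lemma cross_cross_dot (x y z : Fin 3 → ℝ) :
    crossProduct (crossProduct x y) z = (x ⬝ᵥ z) • y - (y ⬝ᵥ z) • x := by
  funext i
  fin_cases i <;>
    simp [cross_apply, dotProduct, Fin.sum_univ_three] <;> ring

private lemma eq_smul_of_cross_eq_zero {n v : Fin 3 → ℝ} (hn : n ≠ 0)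
    (h : crossProduct n v = 0) : ∃ c : ℝ, v = c • n := by
  by_contra hc
  push_neg at hc
  have hli : LinearIndependent ℝ ![n, v] := by
    rw [LinearIndependent.pair_iff' hn]
    exact fun c => (hc c).symm
  exact (crossProduct_ne_zero_iff_linearIndependent.2 hli) h

set_option maxHeartbeats 1600000 in
/-- Reversal in the Suslov system.  Let `a ≠ 0` not be an
eigenvector of the inertia tensor `I` and let `ω : ℝ → ℝ³` be a `C¹` solution of
`I ω̇ + ω × (Iω) = λ(t) a`, `⟨a, ω⟩ = 0`, whose initial condition is not a steady
state (not a multiple of `a × Ia`).  Then there is a nonzero steady state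
`ω₀ ∈ span(a × Ia)` with `ω(t) → ω₀` as `t → +∞` and `ω(t) → −ω₀` as `t → −∞`. -/
theorem suslov_asymptotic_reversal
    (I : Matrix (Fin 3) (Fin 3) ℝ) (hsymm : I.IsSymm) (hpd : I.PosDef)
    (a : Fin 3 → ℝ) (ha : a ≠ 0)
    (hnotEig : LinearIndependent ℝ ![a, I.mulVec a])
    (ω : ℝ → Fin 3 → ℝ) (lam : ℝ → ℝ)
    (hcd : ContDiff ℝ 1 ω)
    (heq : ∀ t : ℝ,
      I.mulVec (deriv ω t) + crossProduct (ω t) (I.mulVec (ω t)) = lam t • a)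
    (hcon : ∀ t : ℝ, a ⬝ᵥ ω t = 0)
    (hns : ¬ ∃ μ : ℝ, ω 0 = μ • crossProduct a (I.mulVec a)) :
    ∃ ω₀ : Fin 3 → ℝ, ω₀ ≠ 0 ∧ (∃ μ : ℝ, ω₀ = μ • crossProduct a (I.mulVec a)) ∧
      Tendsto ω atTop (nhds ω₀) ∧ Tendsto ω atBot (nhds (-ω₀)) := by
  classical
  -- basic notation
  set Ia : Fin 3 → ℝ := I *ᵥ a with hIadef
  set nv : Fin 3 → ℝ := crossProduct a Ia with hnvdef
  have hn : nv ≠ 0 := crossProduct_ne_zero_iff_linearIndependent.2 hnotEig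
  -- symmetry of the bilinear form
  have hdotsym : ∀ x y : Fin 3 → ℝ, x ⬝ᵥ (I *ᵥ y) = y ⬝ᵥ (I *ᵥ x) := by
    intro x y
    simp only [Matrix.mulVec, dotProduct, Fin.sum_univ_three]
    rw [hsymm.apply 0 1, hsymm.apply 0 2, hsymm.apply 1 2]
    ring
  -- the derivative
  have hD : ∀ t, HasDerivAt ω (deriv ω t) t := fun t =>
    ((hcd.differentiable one_ne_zero) t).hasDerivAt
  have heqD : ∀ t, I *ᵥ deriv ω t = lam t • a - crossProduct (ω t) (I *ᵥ ω t) :=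
    fun t => eq_sub_of_add_eq (heq t)
  have haD : ∀ t, a ⬝ᵥ deriv ω t = 0 := by
    intro t
    have h1 := hasDerivAt_const_dot (hD t) a
    have hconst : (fun u => a ⬝ᵥ ω u) = fun _ => (0:ℝ) := funext hcon
    rw [hconst] at h1
    exact h1.unique (hasDerivAt_const t 0)
  -- positive quantities
  have hω0 : ω 0 ≠ 0 := by
    intro h
    exact hns ⟨0, by rw [h]; simp⟩
  set E₀ : ℝ := ω 0 ⬝ᵥ (I *ᵥ ω 0) with hE₀def
  have hE₀pos : 0 < E₀ := by
    have := hpd.dotProduct_mulVec_pos hω0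
    simpa only [star_trivial] using this
  -- energy conservation
  have hdE : ∀ t, HasDerivAt (fun u => ω u ⬝ᵥ (I *ᵥ ω u)) 0 t := by
    intro t
    have h1 := hasDerivAt_quad (hD t) I
    have h2 : deriv ω t ⬝ᵥ (I *ᵥ ω t) + ω t ⬝ᵥ (I *ᵥ deriv ω t) = 0 := by
      rw [hdotsym (deriv ω t) (ω t), heqD t, dotProduct_sub, dotProduct_smul,
        dotProduct_comm (ω t) a, hcon t, dot_self_cross]
      simp
    rw [h2] at h1
    exact h1
  have hEconst : ∀ t, ω t ⬝ᵥ (I *ᵥ ω t) = E₀ := by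
    intro t
    exact is_const_of_deriv_eq_zero (fun u => (hdE u).differentiableAt)
      (fun u => (hdE u).deriv) t 0
  -- boundedness of the trajectory
  obtain ⟨m, hm, hcoer⟩ := posdef_coercive hpd
  set R : ℝ := Real.sqrt (E₀ / m) with hRdef
  have hωbd : ∀ t, ‖ω t‖ ≤ R := by
    intro t
    have h1 : m * ‖ω t‖^2 ≤ E₀ := by
      rw [← hEconst t]; exact hcoer (ω t)
    have h2 : ‖ω t‖^2 ≤ E₀ / m := by
      rw [le_div_iff₀ hm]; linarith
    calc ‖ω t‖ = Real.sqrt (‖ω t‖^2) := (Real.sqrt_sq (norm_nonneg _)).symm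
    _ ≤ R := Real.sqrt_le_sqrt h2
  have hωmem : ∀ t, ω t ∈ Metric.closedBall (0 : Fin 3 → ℝ) R := by
    intro t
    rw [Metric.mem_closedBall, dist_zero_right]
    exact hωbd t
  -- the multiplier
  have hIunit : IsUnit I.det := (Matrix.isUnit_iff_isUnit_det I).1 hpd.isUnit
  have hIinv : I⁻¹ * I = 1 := Matrix.nonsing_inv_mul I hIunit
  set β : ℝ := a ⬝ᵥ (I⁻¹ *ᵥ a) with hβdef
  have hβpos : 0 < β := by
    have := hpd.inv.dotProduct_mulVec_pos ha
    simpa only [star_trivial] using this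
  have hlamf : ∀ t, lam t * β = a ⬝ᵥ (I⁻¹ *ᵥ (crossProduct (ω t) (I *ᵥ ω t))) := by
    intro t
    have h1 := congrArg (fun v => a ⬝ᵥ (I⁻¹ *ᵥ v)) (heq t)
    simp only [Matrix.mulVec_add, Matrix.mulVec_smul, dotProduct_add, dotProduct_smul,
      smul_eq_mul] at h1
    rw [Matrix.mulVec_mulVec, hIinv, Matrix.one_mulVec] at h1
    rw [haD t] at h1
    have h2 : a ⬝ᵥ (I⁻¹ *ᵥ a) = β := rfl
    rw [h2] at h1
    linarith [h1]
  -- the two scalar functions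
  set r : ℝ → ℝ := fun t => Ia ⬝ᵥ ω t with hrdef
  set s : ℝ → ℝ := fun t => (I *ᵥ nv) ⬝ᵥ ω t with hsdef
  have hr_dot : ∀ t, ∀ v : Fin 3 → ℝ, a ⬝ᵥ (I *ᵥ ω t) = r t := by
    intro t _
    rw [hdotsym a (ω t), dotProduct_comm]
  have hs' : ∀ t, HasDerivAt s ((r t)^2) t := by
    intro t
    have h1 := hasDerivAt_const_dot (hD t) (I *ᵥ nv)
    have h2 : (I *ᵥ nv) ⬝ᵥ deriv ω t = (r t)^2 := by
      rw [dotProduct_comm, hdotsym (deriv ω t) nv, heqD t, dotProduct_sub, dotProduct_smul]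
      have hnva : nv ⬝ᵥ a = 0 := by
        rw [dotProduct_comm, hnvdef]
        exact dot_self_cross a Ia
      have hcross : nv ⬝ᵥ (crossProduct (ω t) (I *ᵥ ω t)) = -(r t)^2 := by
        rw [hnvdef]
        rw [cross_dot_cross a Ia (ω t) (I *ᵥ ω t)]
        rw [hcon t, hr_dot t 0, dotProduct_comm Ia (ω t)]
        have : ω t ⬝ᵥ Ia = r t := by rw [dotProduct_comm]
        rw [this]
        ring
      rw [hnva, hcross]
      simp
    rw [← h2]
    exact h1
  -- bound on the derivative of r
  set g : (Fin 3 → ℝ) → ℝ := fun v =>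
    (a ⬝ᵥ (I⁻¹ *ᵥ (crossProduct v (I *ᵥ v)))) / β * (a ⬝ᵥ a)
      - a ⬝ᵥ (crossProduct v (I *ᵥ v)) with hgdef
  have hr' : ∀ t, HasDerivAt r (g (ω t)) t := by
    intro t
    have h1 := hasDerivAt_const_dot (hD t) Ia
    have h2 : Ia ⬝ᵥ deriv ω t = g (ω t) := by
      rw [dotProduct_comm, hIadef, hdotsym (deriv ω t) a, heqD t, dotProduct_sub, dotProduct_smul]
      have hlam2 : lam t = (a ⬝ᵥ (I⁻¹ *ᵥ (crossProduct (ω t) (I *ᵥ ω t)))) / β := by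
        rw [eq_div_iff hβpos.ne']
        linarith [hlamf t]
      rw [hlam2]
      simp only [hgdef, smul_eq_mul]
      try ring
    rw [← h2]
    exact h1
  have hgc : Continuous g := by
    have hβ0 : β ≠ 0 := hβpos.ne'
    simp only [hgdef, cross_apply, Matrix.mulVec, dotProduct, Fin.sum_univ_three,
      Matrix.cons_val_zero, Matrix.cons_val_one, Matrix.head_cons, Matrix.cons_val_two,
      Matrix.tail_cons]
    fun_prop
  obtain ⟨M, hM⟩ := (isCompact_closedBall (0 : Fin 3 → ℝ) R).exists_bound_of_continuousOn
    hgc.continuousOn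
  have hρbd : ∀ t, |g (ω t)| ≤ M := by
    intro t
    have := hM (ω t) (hωmem t)
    rwa [Real.norm_eq_abs] at this
  -- boundedness of s
  have hsc : Continuous fun v : Fin 3 → ℝ => (I *ᵥ nv) ⬝ᵥ v := by
    simp only [Matrix.mulVec, dotProduct, Fin.sum_univ_three]
    fun_prop
  obtain ⟨Bs, hBs⟩ := (isCompact_closedBall (0 : Fin 3 → ℝ) R).exists_bound_of_continuousOn
    hsc.continuousOn
  have hsbd : ∀ t, |s t| ≤ Bs := by
    intro t
    have := hBs (ω t) (hωmem t)
    rw [Real.norm_eq_abs] at this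
    exact this
  -- monotone convergence of s
  have hsmono : Monotone s := monotone_of_deriv_nonneg (fun t => (hs' t).differentiableAt)
    (fun t => by rw [(hs' t).deriv]; positivity)
  have hbddA : BddAbove (Set.range s) := ⟨Bs, by
    rintro y ⟨t, rfl⟩; exact le_of_abs_le (hsbd t)⟩
  have hbddB : BddBelow (Set.range s) := ⟨-Bs, by
    rintro y ⟨t, rfl⟩; exact neg_le_of_abs_le (hsbd t)⟩
  set sS : ℝ := ⨆ t, s t with hsSdef
  set sI : ℝ := ⨅ t, s t with hsIdef
  have hstop : Tendsto s atTop (nhds sS) := tendsto_atTop_ciSup hsmono hbddA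
  have hsbot : Tendsto s atBot (nhds sI) := tendsto_atBot_ciInf hsmono hbddB
  -- r tends to 0 at both ends
  have hrtop : Tendsto r atTop (nhds 0) :=
    aux_tendsto_zero hs' hr' hρbd (fun t => le_of_abs_le (hsbd t))
  have hrbot : Tendsto r atBot (nhds 0) := by
    have hs2 : ∀ t : ℝ, HasDerivAt (fun u => -s (-u)) ((r (-t))^2) t := by
      intro t
      have h1 := ((hs' (-t)).comp t (hasDerivAt_neg t)).neg
      convert h1 using 1
      · rfl
      · rfl
      show r (-t) ^ 2 = -(r (-t) ^ 2 * -1)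
      ring
      rfl
    have hr2 : ∀ t : ℝ, HasDerivAt (fun u => r (-u)) (-(g (ω (-t)))) t := by
      intro t
      have h1 := (hr' (-t)).comp t (hasDerivAt_neg t)
      convert h1 using 1
      · rfl
      · rfl
      show -g (ω (-t)) = g (ω (-t)) * -1
      ring
      rfl
    have haux := aux_tendsto_zero hs2 hr2
      (fun t => by rw [abs_neg]; exact hρbd (-t))
      (fun t => by have := neg_le_of_abs_le (hsbd (-t)); linarith)
    have h3 := haux.comp tendsto_neg_atBot_atTop
    have h4 : ((fun t : ℝ => r (-t)) ∘ Neg.neg) = r := funext fun t => by simp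
    rwa [h4] at h3
  -- the linear equivalence
  set κ : ℝ := (I *ᵥ nv) ⬝ᵥ nv with hκdef
  have hκpos : 0 < κ := by
    have := hpd.dotProduct_mulVec_pos hn
    rw [hκdef, dotProduct_comm]
    simpa only [star_trivial] using this
  set L : (Fin 3 → ℝ) →ₗ[ℝ] (Fin 3 → ℝ) :=
    { toFun := fun v => ![a ⬝ᵥ v, Ia ⬝ᵥ v, (I *ᵥ nv) ⬝ᵥ v],
      map_add' := by
        intro x y
        funext i
        fin_cases i <;> simp [dotProduct_add]
      map_smul' := by
        intro c x
        funext i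
        fin_cases i <;> simp [dotProduct_smul] } with hLdef
  have hLapp : ∀ v, L v = ![a ⬝ᵥ v, Ia ⬝ᵥ v, (I *ᵥ nv) ⬝ᵥ v] := fun v => rfl
  have hLinj : Function.Injective L := by
    rw [injective_iff_map_eq_zero]
    intro v hv
    have h0 : a ⬝ᵥ v = 0 := by
      have := congrFun hv 0
      simpa [hLapp] using this
    have h1 : Ia ⬝ᵥ v = 0 := by
      have := congrFun hv 1
      simpa [hLapp] using this
    have h2 : (I *ᵥ nv) ⬝ᵥ v = 0 := by
      have := congrFun hv 2
      simpa [hLapp] using this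
    have hcr : crossProduct nv v = 0 := by
      rw [hnvdef, cross_cross_dot, h0, h1]
      simp
    obtain ⟨c, rfl⟩ := eq_smul_of_cross_eq_zero hn hcr
    rw [dotProduct_smul, smul_eq_mul] at h2
    have hc0 : c = 0 := by
      rcases mul_eq_zero.1 h2 with h | h
      · exact h
      · exact absurd h hκpos.ne'
    rw [hc0, zero_smul]
  set e : (Fin 3 → ℝ) ≃ₗ[ℝ] (Fin 3 → ℝ) := L.linearEquivOfInjective hLinj rfl with hedef
  have heapp : ∀ v, e v = L v := fun v => L.linearEquivOfInjective_apply hLinj rfl v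
  have hesymc : Continuous e.symm := LinearMap.continuous_of_finiteDimensional e.symm.toLinearMap
  have hωrep : ∀ t, ω t = e.symm ![0, r t, s t] := by
    intro t
    have h1 : e (ω t) = ![0, r t, s t] := by
      rw [heapp, hLapp]
      rw [hcon t]
    rw [← h1, e.symm_apply_apply]
  -- the limits
  have hvtop : Tendsto (fun t => ![(0:ℝ), r t, s t]) atTop (nhds ![0, 0, sS]) := by
    rw [tendsto_pi_nhds]
    intro i
    fin_cases i
    · simpa using (tendsto_const_nhds : Tendsto (fun _ : ℝ => (0:ℝ)) atTop _)
    · simpa using hrtop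
    · simpa using hstop
  have hvbot : Tendsto (fun t => ![(0:ℝ), r t, s t]) atBot (nhds ![0, 0, sI]) := by
    rw [tendsto_pi_nhds]
    intro i
    fin_cases i
    · simpa using (tendsto_const_nhds : Tendsto (fun _ : ℝ => (0:ℝ)) atBot _)
    · simpa using hrbot
    · simpa using hsbot
  set ωp : Fin 3 → ℝ := e.symm ![0, 0, sS] with hωpdef
  set ωm : Fin 3 → ℝ := e.symm ![0, 0, sI] with hωmdef
  have hωtop : Tendsto ω atTop (nhds ωp) := by
    rw [show ω = fun t => e.symm ![0, r t, s t] from funext hωrep]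
    exact (hesymc.tendsto _).comp hvtop
  have hωbot : Tendsto ω atBot (nhds ωm) := by
    rw [show ω = fun t => e.symm ![0, r t, s t] from funext hωrep]
    exact (hesymc.tendsto _).comp hvbot
  -- identify the limits as multiples of nv
  have hadot : a ⬝ᵥ nv = 0 := by rw [hnvdef]; exact dot_self_cross a Ia
  have hIadot : Ia ⬝ᵥ nv = 0 := by rw [hnvdef]; exact dot_cross_self a Ia
  have hchar : ∀ σ : ℝ, e.symm ![0, 0, σ] = (σ / κ) • nv := by
    intro σ
    have h1 : e ((σ / κ) • nv) = ![0, 0, σ] := by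
      rw [heapp, hLapp]
      funext i
      fin_cases i
      · simp [dotProduct_smul, hadot]
      · simp [dotProduct_smul, hIadot]
      · simp only [dotProduct_smul, smul_eq_mul]
        have : σ / κ * ((I *ᵥ nv) ⬝ᵥ nv) = σ := by
          rw [← hκdef]; field_simp
        simpa using this
    rw [← h1, e.symm_apply_apply]
  -- energy of the limits
  have hQc : Continuous fun v : Fin 3 → ℝ => v ⬝ᵥ (I *ᵥ v) := by
    simp only [Matrix.mulVec, dotProduct, Fin.sum_univ_three]
    fun_prop
  have hEp : ωp ⬝ᵥ (I *ᵥ ωp) = E₀ := by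
    have h1 : Tendsto (fun t => ω t ⬝ᵥ (I *ᵥ ω t)) atTop (nhds (ωp ⬝ᵥ (I *ᵥ ωp))) :=
      (hQc.tendsto _).comp hωtop
    have h2 : (fun t => ω t ⬝ᵥ (I *ᵥ ω t)) = fun _ => E₀ := funext hEconst
    rw [h2] at h1
    exact (tendsto_nhds_unique h1 tendsto_const_nhds).symm ▸ rfl
  have hEm : ωm ⬝ᵥ (I *ᵥ ωm) = E₀ := by
    have h1 : Tendsto (fun t => ω t ⬝ᵥ (I *ᵥ ω t)) atBot (nhds (ωm ⬝ᵥ (I *ᵥ ωm))) :=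
      (hQc.tendsto _).comp hωbot
    have h2 : (fun t => ω t ⬝ᵥ (I *ᵥ ω t)) = fun _ => E₀ := funext hEconst
    rw [h2] at h1
    exact (tendsto_nhds_unique h1 tendsto_const_nhds).symm ▸ rfl
  -- ωp ≠ 0
  have hωpne : ωp ≠ 0 := by
    intro h
    rw [h] at hEp
    simp at hEp
    exact hE₀pos.ne' hEp.symm
  -- sI ≠ sS
  have hsne : sI ≠ sS := by
    intro hss
    have hsconst : ∀ t, s t = sS := by
      intro t
      have hle : s t ≤ sS := le_ciSup hbddA t
      have hge : sI ≤ s t := ciInf_le hbddB t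
      linarith [hss ▸ hge]
    have hr0 : ∀ t, r t = 0 := by
      intro t
      have hconst : s = fun _ => sS := funext hsconst
      have h1 := hs' t
      rw [hconst] at h1
      have h2 := h1.unique (hasDerivAt_const t sS)
      exact pow_eq_zero_iff two_ne_zero |>.1 h2
    have hcr : crossProduct nv (ω 0) = 0 := by
      rw [hnvdef, cross_cross_dot, hcon 0]
      have := hr0 0
      rw [hrdef] at this
      simp only at this
      rw [this]
      simp
    obtain ⟨c, hc⟩ := eq_smul_of_cross_eq_zero hn hcr
    exact hns ⟨c, by rw [hc, hnvdef]⟩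
  -- quadratic values
  have hQsmul : ∀ μ : ℝ, (μ • nv) ⬝ᵥ (I *ᵥ (μ • nv)) = μ^2 * (nv ⬝ᵥ (I *ᵥ nv)) := by
    intro μ
    rw [Matrix.mulVec_smul, smul_dotProduct, dotProduct_smul]
    simp [smul_eq_mul]
    ring
  set μp : ℝ := sS / κ with hμpdef
  set μm : ℝ := sI / κ with hμmdef
  have hωpeq : ωp = μp • nv := hchar sS
  have hωmeq : ωm = μm • nv := hchar sI
  have hQnv : nv ⬝ᵥ (I *ᵥ nv) = κ := by rw [hκdef, dotProduct_comm]
  have hμsq : μp^2 * κ = E₀ ∧ μm^2 * κ = E₀ := by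
    constructor
    · rw [← hEp, hωpeq, hQsmul, hQnv]
    · rw [← hEm, hωmeq, hQsmul, hQnv]
  have hμne : μm ≠ μp := by
    intro h
    apply hsne
    rw [hμmdef, hμpdef] at h
    field_simp at h
    exact h
  have hμeq : μm = -μp := by
    have h1 : (μm - μp) * (μm + μp) = 0 := by nlinarith [hμsq.1, hμsq.2, hκpos]
    rcases mul_eq_zero.1 h1 with h | h
    · exact absurd (by linarith : μm = μp) hμne
    · linarith
  have hωmneg : ωm = -ωp := by
    rw [hωmeq, hωpeq, hμeq, neg_smul]
  refine ⟨ωp, hωpne, ⟨μp, by rw [hωpeq, hnvdef, hIadef]⟩, hωtop, ?_⟩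
  rw [← hωmneg]
  exact hωbot
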